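/- Define μ₂(x,y) = BCH(x, (1/2)·BCH(-x,y)). Then for any z, μ₂(BCH(x,z), BCH(y,z)) = BCH(μ₂(x,y), z), i.e. μ₂ is equivariant under right BCH-translation. -/

import Mathlib

/-- Noncommutative formal power series in `n` variables over `ℚ`:
the completed free associative algebra, given by coefficient functions on words. -/
abbrev NC (n : ℕ) := List (Fin n) → ℚ

namespace NC
variable {n : ℕ}

/-- Pointwise addition. -/
def add (f g : NC n) : NC n := fun w => f w + g w

/-- Pointwise negation. -/
def neg (f : NC n) : NC n := fun w => - f w

/-- Pointwise subtraction. -/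
def sub (f g : NC n) : NC n := fun w => f w - g w

/-- Scalar multiplication. -/
def smul (q : ℚ) (f : NC n) : NC n := fun w => q * f w

/-- The zero series. -/
def zero : NC n := fun _ => 0

/-- The unit series. -/
def one : NC n := fun w => if w = [] then 1 else 0

/-- The `i`-th generator (noncommuting indeterminate). -/
def X (i : Fin n) : NC n := fun w => if w = [i] then 1 else 0

/-- The Cauchy (concatenation) product of noncommutative series. -/
def mul (f g : NC n) : NC n :=
  fun w => ∑ k ∈ Finset.range (w.length + 1), f (w.take k) * g (w.drop k)

/-- Powers. -/
def pow (f : NC n) : ℕ → NC n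
  | 0 => one
  | k + 1 => mul f (pow f k)

/-- The Lie bracket `[f,g] = fg - gf`. -/
def br (f g : NC n) : NC n := sub (mul f g) (mul g f)

/-- The formal exponential; for a series with zero constant term all but finitely
many terms contribute to each coefficient, so this truncated sum is exact. -/
def exp (f : NC n) : NC n :=
  fun w => ∑ k ∈ Finset.range (w.length + 1), (k.factorial : ℚ)⁻¹ * pow f k w

/-- The formal logarithm; exact on series with constant term `1`. -/
def log (g : NC n) : NC n :=
  fun w => ∑ k ∈ Finset.range (w.length + 1),
    (-1 : ℚ) ^ (k + 1) * (k : ℚ)⁻¹ * pow (sub g one) k w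

/-- The Baker–Campbell–Hausdorff series: the unique formal series with
`exp f * exp g = exp (bch f g)`. -/
def bch (f g : NC n) : NC n := log (mul (exp f) (exp g))

/-- `μ₂(x,y) = BCH(x, ½·BCH(-x,y))`. -/
def mu2 (f g : NC n) : NC n := bch f (smul (1/2) (bch (neg f) g))

/-- Iterated (multi-argument) BCH: `BCH(x₁,…,xₙ) = BCH(x₁, BCH(x₂,…,xₙ))`. -/
def bchList : List (NC n) → NC n
  | [] => zero
  | f :: l => bch f (bchList l)

/-- Truncation: projection onto the span of words of length `≤ d`
(Lie monomials with at most `d - 1` brackets). -/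
def trunc (d : ℕ) (f : NC n) : NC n :=
  fun w => if w.length ≤ d then f w else 0

/-- `exp(ad_f)` applied to `g`, i.e. `Σ_k ad_f^k(g)/k!`; for `f` with zero constant
term all but finitely many terms contribute to each coefficient. -/
def expAd (f g : NC n) : NC n :=
  fun w => ∑ k ∈ Finset.range (w.length + 1),
    (k.factorial : ℚ)⁻¹ * ((fun z => br f z)^[k] g) w

end NC

namespace NC
variable {n : ℕ}

lemma mul_one' (f : NC n) : mul f one = f := by
  funext w
  unfold mul one
  rw [Finset.sum_eq_single w.length]
  · simp
  · intro k hk hne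
    simp only [Finset.mem_range] at hk
    rw [if_neg, mul_zero]
    intro h
    rw [List.drop_eq_nil_iff] at h
    exact hne (by omega)
  · intro h
    simp at h

lemma one_mul' (f : NC n) : mul one f = f := by
  funext w
  unfold mul one
  rw [Finset.sum_eq_single 0]
  · simp
  · intro k hk hne
    rw [if_neg, zero_mul]
    intro h
    rw [List.take_eq_nil_iff] at h
    rcases h with h | h
    · exact hne h
    · simp only [Finset.mem_range, h] at hk
      simp at hk
      exact hne (by omega)
  · intro h
    simp at h

lemma mul_assoc' (f g h : NC n) : mul (mul f g) h = mul f (mul g h) := by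
  funext w
  show ∑ k ∈ Finset.range (w.length + 1), mul f g (w.take k) * h (w.drop k)
     = ∑ j ∈ Finset.range (w.length + 1), f (w.take j) * mul g h (w.drop j)
  have lhs : ∑ k ∈ Finset.range (w.length + 1), mul f g (w.take k) * h (w.drop k)
      = ∑ k ∈ Finset.range (w.length + 1), ∑ j ∈ Finset.range (k + 1),
          f (w.take j) * (g ((w.drop j).take (k - j)) * h (w.drop k)) := by
    refine Finset.sum_congr rfl fun k hk => ?_
    simp only [Finset.mem_range] at hk
    unfold mul
    rw [List.length_take, min_eq_left (by omega), Finset.sum_mul]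
    refine Finset.sum_congr rfl fun j hj => ?_
    simp only [Finset.mem_range] at hj
    rw [List.take_take, min_eq_left (by omega), List.drop_take, mul_assoc]
  have rhs : ∑ j ∈ Finset.range (w.length + 1), f (w.take j) * mul g h (w.drop j)
      = ∑ j ∈ Finset.range (w.length + 1), ∑ i ∈ Finset.range (w.length - j + 1),
          f (w.take j) * (g ((w.drop j).take i) * h (w.drop (j + i))) := by
    refine Finset.sum_congr rfl fun j hj => ?_
    simp only [Finset.mem_range] at hj
    unfold mul
    rw [List.length_drop, Finset.mul_sum]
    refine Finset.sum_congr rfl fun i hi => ?_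
    rw [List.drop_drop]
  rw [lhs, rhs, Finset.sum_sigma', Finset.sum_sigma']
  refine Finset.sum_nbij' (fun x => ⟨x.2, x.1 - x.2⟩) (fun y => ⟨y.1 + y.2, y.1⟩) ?_ ?_ ?_ ?_ ?_
  · rintro ⟨k, j⟩ hx
    simp only [Finset.mem_sigma, Finset.mem_range] at hx ⊢
    omega
  · rintro ⟨j, i⟩ hy
    simp only [Finset.mem_sigma, Finset.mem_range] at hy ⊢
    omega
  · rintro ⟨k, j⟩ hx
    simp only [Finset.mem_sigma, Finset.mem_range] at hx
    have : j + (k - j) = k := by omega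
    simp [this]
  · rintro ⟨j, i⟩ hy
    simp only [Finset.mem_sigma, Finset.mem_range] at hy
    have : j + i - j = i := by omega
    simp [this]
  · rintro ⟨k, j⟩ hx
    simp only [Finset.mem_sigma, Finset.mem_range] at hx
    have : j + (k - j) = k := by omega
    simp [this]

end NC
namespace NC
variable {n : ℕ}

lemma smul_mul' (q : ℚ) (f g : NC n) : mul (smul q f) g = smul q (mul f g) := by
  funext w; simp [mul, smul, Finset.mul_sum, mul_assoc]

lemma mul_smul' (q : ℚ) (f g : NC n) : mul f (smul q g) = smul q (mul f g) := by
  funext w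
  simp only [mul, smul, Finset.mul_sum]
  exact Finset.sum_congr rfl fun k _ => by ring

lemma mul_add' (f g h : NC n) : mul f (add g h) = add (mul f g) (mul f h) := by
  funext w
  simp only [mul, add, mul_add]
  exact Finset.sum_add_distrib

lemma add_mul' (f g h : NC n) : mul (add f g) h = add (mul f h) (mul g h) := by
  funext w
  simp only [mul, add, add_mul]
  exact Finset.sum_add_distrib

lemma mul_sum' {ι : Type*} (s : Finset ι) (f : NC n) (g : ι → NC n) :
    mul f (∑ i ∈ s, g i) = ∑ i ∈ s, mul f (g i) := by
  funext w
  simp only [mul, Finset.sum_apply, Finset.mul_sum]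
  exact Finset.sum_comm

lemma sum_mul' {ι : Type*} (s : Finset ι) (f : ι → NC n) (g : NC n) :
    mul (∑ i ∈ s, f i) g = ∑ i ∈ s, mul (f i) g := by
  funext w
  simp only [mul, Finset.sum_apply, Finset.sum_mul]
  exact Finset.sum_comm

lemma smul_apply' (q : ℚ) (f : NC n) (w : List (Fin n)) : smul q f w = q * f w := rfl

lemma smul_sum' {ι : Type*} (s : Finset ι) (q : ℚ) (g : ι → NC n) :
    smul q (∑ i ∈ s, g i) = ∑ i ∈ s, smul q (g i) := by
  funext w
  simp [smul, Finset.mul_sum]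

lemma smul_smul' (p q : ℚ) (f : NC n) : smul p (smul q f) = smul (p * q) f := by
  funext w; simp [smul, mul_assoc]

lemma mul_const (f g : NC n) : mul f g [] = f [] * g [] := by
  simp [mul]

lemma one_const : (one : NC n) [] = 1 := by simp [one]

lemma pow_const (f : NC n) (k : ℕ) : pow f k [] = f [] ^ k := by
  induction k with
  | zero => simp [pow, one]
  | succ k ih => rw [pow, mul_const, ih, pow_succ]; ring

lemma exp_const (f : NC n) : exp f [] = 1 := by
  simp [exp, pow, one]

lemma log_const (g : NC n) : log g [] = 0 := by
  simp [log]

lemma pow_one'' (f : NC n) : pow f 1 = f := by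
  show mul f one = f
  exact mul_one' f

lemma pow_add' (f : NC n) (a b : ℕ) : mul (pow f a) (pow f b) = pow f (a + b) := by
  induction a with
  | zero => show mul one _ = _; rw [one_mul', Nat.zero_add]
  | succ a ih =>
      show mul (mul f (pow f a)) (pow f b) = pow f (a + 1 + b)
      rw [mul_assoc', ih]
      have : a + 1 + b = (a + b) + 1 := by omega
      rw [this]; rfl

lemma pow_eq_zero_of_lt {f : NC n} (hf : f [] = 0) :
    ∀ (k : ℕ) (w : List (Fin n)), w.length < k → pow f k w = 0 := by
  intro k
  induction k with
  | zero => intro w hw; omega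
  | succ k ih =>
      intro w hw
      show ∑ j ∈ Finset.range (w.length + 1), f (w.take j) * pow f k (w.drop j) = 0
      refine Finset.sum_eq_zero fun j hj => ?_
      simp only [Finset.mem_range] at hj
      rcases Nat.eq_zero_or_pos j with rfl | hjpos
      · simp [hf]
      · rw [ih (w.drop j) (by rw [List.length_drop]; omega), mul_zero]

lemma mul_congr {L : ℕ} {F F' G G' : NC n}
    (hF : ∀ v : List (Fin n), v.length ≤ L → F v = F' v)
    (hG : ∀ v : List (Fin n), v.length ≤ L → G v = G' v) :
    ∀ w : List (Fin n), w.length ≤ L → mul F G w = mul F' G' w := by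
  intro w hw
  unfold mul
  refine Finset.sum_congr rfl fun k _ => ?_
  rw [hF _ (le_trans (by rw [List.length_take]; omega) hw),
      hG _ (le_trans (by rw [List.length_drop]; omega) hw)]

end NC
namespace NC
variable {n : ℕ}

/-- Evaluation of a univariate coefficient sequence on `f`. -/
def ev (c : ℕ → ℚ) (f : NC n) : NC n :=
  fun w => ∑ m ∈ Finset.range (w.length + 1), c m * pow f m w

lemma exp_eq_ev (f : NC n) : exp f = ev (fun k => (k.factorial : ℚ)⁻¹) f := rfl

lemma log_eq_ev (g : NC n) :
    log g = ev (fun k => (-1 : ℚ) ^ (k + 1) * (k : ℚ)⁻¹) (sub g one) := rfl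

lemma ev_eq_of_lt {f : NC n} (hf : f [] = 0) (c : ℕ → ℚ) {N : ℕ} {w : List (Fin n)}
    (hN : w.length < N) :
    ev c f w = ∑ m ∈ Finset.range N, c m * pow f m w := by
  refine Finset.sum_subset ?_ ?_
  · intro m hm
    simp only [Finset.mem_range] at hm ⊢
    omega
  · intro m _ hm
    simp only [Finset.mem_range] at hm
    rw [pow_eq_zero_of_lt hf m w (by omega), mul_zero]

lemma ev_eq_sum_pow {f : NC n} (hf : f [] = 0) {N : ℕ} {w : List (Fin n)}
    (hN : w.length < N) (c : ℕ → ℚ) :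
    ev c f w = (∑ m ∈ Finset.range N, smul (c m) (pow f m)) w := by
  rw [ev_eq_of_lt hf c hN, Finset.sum_apply]
  rfl

/-- Cauchy convolution of coefficient sequences. -/
def conv (c d : ℕ → ℚ) : ℕ → ℚ := fun m => ∑ i ∈ Finset.range (m + 1), c i * d (m - i)

/-- The unit sequence. -/
def cone : ℕ → ℚ := fun m => if m = 0 then 1 else 0

lemma ev_cone (f : NC n) : ev cone f = one := by
  funext w
  unfold ev cone
  rw [Finset.sum_eq_single 0]
  · show (1 : ℚ) * one w = one w
    rw [one_mul]
  · intro k _ hk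
    rw [if_neg hk, zero_mul]
  · intro h
    simp at h

lemma ev_mul {f : NC n} (hf : f [] = 0) (c d : ℕ → ℚ) :
    mul (ev c f) (ev d f) = ev (conv c d) f := by
  funext w
  have key : mul (ev c f) (ev d f) w
      = mul (∑ m ∈ Finset.range (w.length + 1), smul (c m) (pow f m))
            (∑ m ∈ Finset.range (w.length + 1), smul (d m) (pow f m)) w := by
    refine mul_congr ?_ ?_ w le_rfl
    · intro v hv
      exact ev_eq_sum_pow hf (by omega) c
    · intro v hv
      exact ev_eq_sum_pow hf (by omega) d
  have key2 : mul (∑ m ∈ Finset.range (w.length + 1), smul (c m) (pow f m))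
            (∑ m ∈ Finset.range (w.length + 1), smul (d m) (pow f m))
      = ∑ m ∈ Finset.range (w.length + 1), ∑ j ∈ Finset.range (w.length + 1),
          smul (c m * d j) (pow f (m + j)) := by
    rw [sum_mul']
    refine Finset.sum_congr rfl fun m _ => ?_
    rw [mul_sum']
    refine Finset.sum_congr rfl fun j _ => ?_
    rw [smul_mul', mul_smul', smul_smul', pow_add']
  rw [key, key2]
  simp only [Finset.sum_apply, smul_apply']
  show _ = ∑ m ∈ Finset.range (w.length + 1), conv c d m * pow f m w
  have rhs : ∑ m ∈ Finset.range (w.length + 1), conv c d m * pow f m w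
      = ∑ m ∈ Finset.range (w.length + 1), ∑ i ∈ Finset.range (m + 1),
          c i * d (m - i) * pow f m w := by
    refine Finset.sum_congr rfl fun m _ => ?_
    unfold conv
    rw [Finset.sum_mul]
  rw [rhs]
  rw [← Finset.sum_product']
  have sub : (Finset.range (w.length + 1) ×ˢ Finset.range (w.length + 1)).filter
        (fun p => p.1 + p.2 ≤ w.length) ⊆
      Finset.range (w.length + 1) ×ˢ Finset.range (w.length + 1) := Finset.filter_subset _ _
  rw [← Finset.sum_subset sub ?vanish]
  case vanish =>
    intro p hp hnp
    simp only [Finset.mem_filter, Finset.mem_product, Finset.mem_range] at hp hnp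
    rw [pow_eq_zero_of_lt hf _ w (by omega), mul_zero]
  rw [Finset.sum_sigma']
  refine (Finset.sum_nbij' (fun x => ⟨x.2, x.1 - x.2⟩) (fun p => ⟨p.1 + p.2, p.1⟩)
    ?_ ?_ ?_ ?_ ?_).symm
  · rintro ⟨m, i⟩ hx
    simp only [Finset.mem_sigma, Finset.mem_range] at hx
    simp only [Finset.mem_filter, Finset.mem_product, Finset.mem_range]
    omega
  · rintro ⟨a, b⟩ hp
    simp only [Finset.mem_filter, Finset.mem_product, Finset.mem_range] at hp
    simp only [Finset.mem_sigma, Finset.mem_range]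
    omega
  · rintro ⟨m, i⟩ hx
    simp only [Finset.mem_sigma, Finset.mem_range] at hx
    have : i + (m - i) = m := by omega
    simp [this]
  · rintro ⟨a, b⟩ hp
    have : a + b - a = b := by omega
    simp [this]
  · rintro ⟨m, i⟩ hx
    simp only [Finset.mem_sigma, Finset.mem_range] at hx
    have : i + (m - i) = m := by omega
    rw [this]

/-- Iterated convolution power. -/
def cpow (c : ℕ → ℚ) : ℕ → (ℕ → ℚ)
  | 0 => cone
  | k + 1 => conv c (cpow c k)

lemma ev_pow {f : NC n} (hf : f [] = 0) (c : ℕ → ℚ) (k : ℕ) :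
    pow (ev c f) k = ev (cpow c k) f := by
  induction k with
  | zero => exact (ev_cone f).symm
  | succ k ih =>
      show mul (ev c f) (pow (ev c f) k) = ev (cpow c (k + 1)) f
      rw [ih, ev_mul hf]
      rfl

end NC
namespace NCAux

open scoped Classical

/-- Exp-minus-one coefficients. -/
def Ec0 : ℕ → ℚ := fun k => if k = 0 then 0 else (k.factorial : ℚ)⁻¹
/-- Logarithm coefficients. -/
def Lc : ℕ → ℚ := fun k => (-1 : ℚ) ^ (k + 1) * (k : ℚ)⁻¹

lemma Lc_zero : Lc 0 = 0 := by simp [Lc]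

lemma cpow_eq_coeff (c : ℕ → ℚ) (k m : ℕ) :
    NC.cpow c k m = PowerSeries.coeff (R := ℚ) m ((PowerSeries.mk c) ^ k) := by
  induction k generalizing m with
  | zero =>
      rw [pow_zero, PowerSeries.coeff_one]
      rfl
  | succ k ih =>
      show NC.conv c (NC.cpow c k) m = _
      rw [pow_succ', PowerSeries.coeff_mul,
        Finset.Nat.sum_antidiagonal_eq_sum_range_succ_mk]
      unfold NC.conv
      refine Finset.sum_congr rfl fun i _ => ?_
      rw [PowerSeries.coeff_mk, ih]

lemma cpow_zero_of_lt {c : ℕ → ℚ} (h0 : c 0 = 0) {k m : ℕ} (h : m < k) :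
    NC.cpow c k m = 0 := by
  rw [cpow_eq_coeff]
  have hdvd : (PowerSeries.X : PowerSeries ℚ) ^ k ∣ (PowerSeries.mk c) ^ k :=
    pow_dvd_pow_of_dvd (PowerSeries.X_dvd_iff.2 (by simpa using h0)) k
  exact (PowerSeries.X_pow_dvd_iff.1 hdvd) m h

lemma mk_Ec0 : PowerSeries.mk Ec0 = PowerSeries.exp ℚ - 1 := by
  ext m
  rw [PowerSeries.coeff_mk, map_sub, PowerSeries.coeff_exp, PowerSeries.coeff_one]
  rcases Nat.eq_zero_or_pos m with rfl | hm
  · simp [Ec0]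
  · simp only [Ec0, if_neg (by omega : ¬ m = 0)]
    simp [one_div]

lemma derivative_exp' : PowerSeries.derivative ℚ (PowerSeries.exp ℚ) = PowerSeries.exp ℚ := by
  ext m
  rw [PowerSeries.coeff_derivative, PowerSeries.coeff_exp, PowerSeries.coeff_exp]
  simp only [Algebra.algebraMap_self_apply]
  rw [Nat.factorial_succ]
  push_cast
  rw [one_div, one_div, mul_inv]
  have h1 : ((m : ℚ) + 1) ≠ 0 := by positivity
  field_simp

/-- Partial sums of the formal logarithm of `exp`. -/
noncomputable def S (N : ℕ) : PowerSeries ℚ :=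
  ∑ k ∈ Finset.range (N + 1), Lc k • (PowerSeries.exp ℚ - 1) ^ k

lemma derivative_S (N : ℕ) :
    PowerSeries.derivative ℚ (S N) = 1 - (-(PowerSeries.exp ℚ - 1)) ^ N := by
  unfold S
  rw [map_sum, Finset.sum_range_succ']
  have t0 : PowerSeries.derivative ℚ (Lc 0 • (PowerSeries.exp ℚ - 1) ^ 0) = 0 := by
    rw [Lc_zero, zero_smul, map_zero]
  rw [t0, add_zero]
  have step : ∀ k : ℕ, PowerSeries.derivative ℚ (Lc (k + 1) • (PowerSeries.exp ℚ - 1) ^ (k + 1))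
      = (-(PowerSeries.exp ℚ - 1)) ^ k * PowerSeries.exp ℚ := by
    intro k
    rw [Derivation.map_smul, Derivation.leibniz_pow, map_sub, derivative_exp',
      Derivation.map_one_eq_zero, sub_zero, Nat.add_sub_cancel,
      ← Nat.cast_smul_eq_nsmul ℚ, smul_smul]
    have harith : Lc (k + 1) * ((k + 1 : ℕ) : ℚ) = (-1 : ℚ) ^ k := by
      unfold Lc
      have h1 : (((k : ℕ) + 1 : ℕ) : ℚ) ≠ 0 := by positivity
      push_cast
      push_cast at h1
      field_simp
      ring
    rw [harith, smul_eq_mul, Algebra.smul_def, map_pow, map_neg, map_one, ← mul_assoc,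
      ← mul_pow, neg_one_mul]
  simp only [step]
  rw [← Finset.sum_mul]
  have h := geom_sum_mul (-(PowerSeries.exp ℚ - 1)) N
  have hx : (-(PowerSeries.exp ℚ - 1)) - 1 = -(PowerSeries.exp ℚ) := by ring
  rw [hx] at h
  linear_combination -h

end NCAux
namespace NCAux

lemma coeff_EsubOne_pow_zero {k m : ℕ} (h : m < k) :
    PowerSeries.coeff (R := ℚ) m ((PowerSeries.exp ℚ - 1) ^ k) = 0 := by
  rw [← mk_Ec0, ← cpow_eq_coeff]
  exact cpow_zero_of_lt (by simp [Ec0]) h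

lemma coeff_S_zero (N : ℕ) : PowerSeries.coeff (R := ℚ) 0 (S N) = 0 := by
  unfold S
  rw [map_sum]
  refine Finset.sum_eq_zero fun k hk => ?_
  rw [map_smul]
  rcases Nat.eq_zero_or_pos k with rfl | hkpos
  · rw [Lc_zero, zero_smul]
  · rw [coeff_EsubOne_pow_zero hkpos, smul_zero]

lemma coeff_S (m N : ℕ) (hm : m ≤ N) :
    PowerSeries.coeff (R := ℚ) m (S N) = if m = 1 then 1 else 0 := by
  rcases Nat.eq_zero_or_pos m with rfl | hmpos
  · rw [coeff_S_zero]; simp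
  · obtain ⟨p, rfl⟩ : ∃ p, m = p + 1 := ⟨m - 1, by omega⟩
    have hd := congrArg (PowerSeries.coeff (R := ℚ) p) (derivative_S N)
    rw [PowerSeries.coeff_derivative, map_sub, PowerSeries.coeff_one] at hd
    have hpow : PowerSeries.coeff (R := ℚ) p ((-(PowerSeries.exp ℚ - 1)) ^ N) = 0 := by
      have hneg : (-(PowerSeries.exp ℚ - 1)) = (-1 : ℚ) • (PowerSeries.exp ℚ - 1) := by
        rw [neg_one_smul]
      rw [hneg, smul_pow, map_smul, coeff_EsubOne_pow_zero (by omega), smul_zero]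
    rw [hpow, sub_zero] at hd
    have hne : ((p : ℚ) + 1) ≠ 0 := by positivity
    have key : PowerSeries.coeff (R := ℚ) (p + 1) (S N) = (if p = 0 then (1 : ℚ) else 0) * ((p : ℚ) + 1)⁻¹ := by
      rw [← hd, mul_inv_cancel_right₀ hne]
    rw [key]
    rcases Nat.eq_zero_or_pos p with rfl | hp
    · norm_num
    · rw [if_neg (by omega), if_neg (by omega), zero_mul]

lemma D_eq (m : ℕ) :
    ∑ k ∈ Finset.range (m + 1), Lc k * NC.cpow Ec0 k m = if m = 1 then 1 else 0 := by
  have h1 : ∀ k, Lc k * NC.cpow Ec0 k m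
      = Lc k • PowerSeries.coeff (R := ℚ) m ((PowerSeries.exp ℚ - 1) ^ k) := by
    intro k; rw [cpow_eq_coeff, mk_Ec0, smul_eq_mul]
  rw [Finset.sum_congr rfl fun k _ => h1 k]
  have h2 : ∑ k ∈ Finset.range (m + 1), Lc k • PowerSeries.coeff (R := ℚ) m ((PowerSeries.exp ℚ - 1) ^ k)
      = PowerSeries.coeff (R := ℚ) m (S m) := by
    unfold S
    rw [map_sum]
    exact Finset.sum_congr rfl fun k _ => (map_smul _ _ _).symm
  rw [h2, coeff_S m m le_rfl]

end NCAux

namespace NC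
variable {n : ℕ}

lemma sub_exp_one (f : NC n) : sub (exp f) one = ev NCAux.Ec0 f := by
  funext w
  show exp f w - one w = _
  rw [exp_eq_ev]
  have key : ev (fun k => (k.factorial : ℚ)⁻¹) f w - ev NCAux.Ec0 f w = one w := by
    unfold ev
    rw [← Finset.sum_sub_distrib]
    rw [Finset.sum_eq_single 0]
    · show ((Nat.factorial 0 : ℚ)⁻¹ * pow f 0 w) - (NCAux.Ec0 0 * pow f 0 w) = one w
      simp [NCAux.Ec0, pow]
    · intro m _ hm
      show ((m.factorial : ℚ)⁻¹ * pow f m w) - (NCAux.Ec0 m * pow f m w) = 0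
      rw [NCAux.Ec0, if_neg hm]
      ring
    · intro h; simp at h
  linarith [key]

lemma ev_const_zero {f : NC n} (c : ℕ → ℚ) (hc : c 0 = 0) : ev c f [] = 0 := by
  show ∑ m ∈ Finset.range 1, c m * pow f m [] = 0
  rw [Finset.sum_range_one, hc, zero_mul]

lemma log_exp {f : NC n} (hf : f [] = 0) : log (exp f) = f := by
  funext w
  have hlog : log (exp f) = ev NCAux.Lc (sub (exp f) one) := rfl
  rw [hlog, sub_exp_one]
  show ∑ k ∈ Finset.range (w.length + 1), NCAux.Lc k * pow (ev NCAux.Ec0 f) k w = f w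
  have step1 : ∀ k, pow (ev NCAux.Ec0 f) k w = ∑ m ∈ Finset.range (w.length + 1),
      cpow NCAux.Ec0 k m * pow f m w := by
    intro k
    rw [ev_pow hf]
    rfl
  calc ∑ k ∈ Finset.range (w.length + 1), NCAux.Lc k * pow (ev NCAux.Ec0 f) k w
      = ∑ k ∈ Finset.range (w.length + 1), ∑ m ∈ Finset.range (w.length + 1),
          NCAux.Lc k * (cpow NCAux.Ec0 k m * pow f m w) := by
        refine Finset.sum_congr rfl fun k _ => ?_
        rw [step1, Finset.mul_sum]
    _ = ∑ m ∈ Finset.range (w.length + 1), (∑ k ∈ Finset.range (w.length + 1),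
          NCAux.Lc k * cpow NCAux.Ec0 k m) * pow f m w := by
        rw [Finset.sum_comm]
        refine Finset.sum_congr rfl fun m _ => ?_
        rw [Finset.sum_mul]
        exact Finset.sum_congr rfl fun k _ => by ring
    _ = ∑ m ∈ Finset.range (w.length + 1), (if m = 1 then (1:ℚ) else 0) * pow f m w := by
        refine Finset.sum_congr rfl fun m hm => ?_
        simp only [Finset.mem_range] at hm
        have htr : ∑ k ∈ Finset.range (w.length + 1), NCAux.Lc k * cpow NCAux.Ec0 k m
            = ∑ k ∈ Finset.range (m + 1), NCAux.Lc k * cpow NCAux.Ec0 k m := by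
          refine (Finset.sum_subset ?_ ?_).symm
          · intro k hk
            simp only [Finset.mem_range] at hk ⊢
            omega
          · intro k _ hk
            simp only [Finset.mem_range] at hk
            rw [NCAux.cpow_zero_of_lt (by simp [NCAux.Ec0]) (by omega), mul_zero]
        rw [htr, NCAux.D_eq]
    _ = pow f 1 w := by
        rw [Finset.sum_eq_single 1]
        · rw [if_pos rfl, one_mul]
        · intro m _ hm
          rw [if_neg hm, zero_mul]
        · intro h
          simp only [Finset.mem_range] at h
          have : w.length = 0 := by omega
          rw [if_pos rfl, one_mul, pow_one'']
          rw [List.length_eq_zero_iff.1 this, hf]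
    _ = f w := by rw [pow_one'']

end NC
namespace NC
variable {n : ℕ}

lemma pow_congr {u u' : NC n} (hu : u [] = 0) (hu' : u' [] = 0) {L : ℕ}
    (hagree : ∀ v : List (Fin n), v.length < L → u v = u' v) :
    ∀ k, 2 ≤ k → ∀ w : List (Fin n), w.length ≤ L → pow u k w = pow u' k w := by
  intro k
  induction k with
  | zero => intro hk; omega
  | succ k ih =>
      intro hk w hw
      show ∑ j ∈ Finset.range (w.length + 1), u (w.take j) * pow u k (w.drop j)
         = ∑ j ∈ Finset.range (w.length + 1), u' (w.take j) * pow u' k (w.drop j)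
      refine Finset.sum_congr rfl fun j hj => ?_
      simp only [Finset.mem_range] at hj
      rcases Nat.eq_zero_or_pos j with rfl | hjpos
      · simp [hu, hu']
      · rcases Nat.lt_or_ge j w.length with hjlt | hjge
        · have hfst : u (w.take j) = u' (w.take j) := by
            apply hagree
            rw [List.length_take]
            omega
          have hsnd : pow u k (w.drop j) = pow u' k (w.drop j) := by
            rcases Nat.lt_or_ge k 2 with hk2 | hk2
            · have hk1 : k = 1 := by omega
              subst hk1
              rw [pow_one'', pow_one'']
              apply hagree
              rw [List.length_drop]
              omega
            · exact ih hk2 (w.drop j) (by rw [List.length_drop]; omega)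
          rw [hfst, hsnd]
        · have hj' : j = w.length := by omega
          subst hj'
          rw [List.drop_length]
          have hk1 : 1 ≤ k := by omega
          have z1 : pow u k [] = 0 := by
            rw [pow_const, hu, zero_pow (by omega)]
          have z2 : pow u' k [] = 0 := by
            rw [pow_const, hu', zero_pow (by omega)]
          rw [z1, z2, mul_zero, mul_zero]

lemma log_inj {g g' : NC n} (hg : g [] = 1) (hg' : g' [] = 1) (h : log g = log g') :
    g = g' := by
  suffices H : ∀ (L : ℕ) (w : List (Fin n)), w.length = L → g w = g' w by
    funext w; exact H w.length w rfl
  intro L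
  induction L using Nat.strong_induction_on with
  | _ L ih =>
      intro w hw
      rcases Nat.eq_zero_or_pos L with rfl | hLpos
      · rw [List.length_eq_zero_iff.1 hw, hg, hg']
      have hagree : ∀ v : List (Fin n), v.length < L → sub g one v = sub g' one v := by
        intro v hv
        show g v - one v = g' v - one v
        rw [ih v.length hv v rfl]
      have hu : sub g one [] = 0 := by simp [sub, one, hg]
      have hu' : sub g' one [] = 0 := by simp [sub, one, hg']
      have hlogw := congrFun h w
      have e1 : log g w = ∑ k ∈ Finset.range (w.length + 1),
          NCAux.Lc k * pow (sub g one) k w := rfl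
      have e2 : log g' w = ∑ k ∈ Finset.range (w.length + 1),
          NCAux.Lc k * pow (sub g' one) k w := rfl
      rw [e1, e2] at hlogw
      have key : ∑ k ∈ Finset.range (w.length + 1),
            (NCAux.Lc k * pow (sub g one) k w - NCAux.Lc k * pow (sub g' one) k w)
          = g w - g' w := by
        rw [Finset.sum_eq_single 1]
        · rw [pow_one'', pow_one'']
          have hLc1 : NCAux.Lc 1 = 1 := by norm_num [NCAux.Lc]
          rw [hLc1, one_mul, one_mul]
          show (g w - one w) - (g' w - one w) = g w - g' w
          ring
        · intro k hk hk1
          rcases Nat.eq_zero_or_pos k with rfl | hkpos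
          · rw [NCAux.Lc_zero, zero_mul, zero_mul, sub_zero]
          · have hk2 : 2 ≤ k := by omega
            rw [pow_congr hu hu' (L := L) hagree k hk2 w (by omega)]
            ring
        · intro hmem
          simp only [Finset.mem_range] at hmem
          omega
      rw [Finset.sum_sub_distrib, hlogw, sub_self] at key
      linarith [key]

lemma exp_log {g : NC n} (hg : g [] = 1) : exp (log g) = g := by
  refine log_inj (exp_const _) hg ?_
  rw [log_exp (log_const g)]

end NC
namespace NC
variable {n : ℕ}

/-- Exponential coefficients. -/
def cE : ℕ → ℚ := fun k => (k.factorial : ℚ)⁻¹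
/-- Exponential coefficients with alternating signs. -/
def cEneg : ℕ → ℚ := fun k => (-1 : ℚ) ^ k * (k.factorial : ℚ)⁻¹

lemma neg_eq_smul (f : NC n) : neg f = smul (-1) f := by
  funext w; simp [neg, smul]

lemma pow_smul (q : ℚ) (f : NC n) (k : ℕ) :
    pow (smul q f) k = smul (q ^ k) (pow f k) := by
  induction k with
  | zero =>
      show one = smul (q ^ 0) one
      funext w; simp [smul]
  | succ k ih =>
      show mul (smul q f) (pow (smul q f) k) = _
      rw [ih, smul_mul', mul_smul', smul_smul']
      show smul (q * q ^ k) (mul f (pow f k)) = smul (q ^ (k + 1)) (pow f (k + 1))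
      rw [pow_succ, mul_comm (q ^ k) q]
      rfl

lemma exp_neg_eq_ev (f : NC n) : exp (neg f) = ev cEneg f := by
  rw [exp_eq_ev, neg_eq_smul]
  funext w
  unfold ev
  refine Finset.sum_congr rfl fun k _ => ?_
  rw [pow_smul]
  show (k.factorial : ℚ)⁻¹ * ((-1 : ℚ) ^ k * pow f k w) = cEneg k * pow f k w
  unfold cEneg
  ring

lemma conv_cE_cEneg : conv cE cEneg = cone := by
  funext m
  unfold conv cE cEneg cone
  rcases Nat.eq_zero_or_pos m with rfl | hm
  · simp
  rw [if_neg (by omega)]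
  have hterm : ∀ i ∈ Finset.range (m + 1),
      (i.factorial : ℚ)⁻¹ * ((-1 : ℚ) ^ (m - i) * ((m - i).factorial : ℚ)⁻¹)
      = ((-1 : ℚ) ^ m * (m.factorial : ℚ)⁻¹) * ((-1 : ℚ) ^ i * (m.choose i : ℚ)) := by
    intro i hi
    simp only [Finset.mem_range] at hi
    have hle : i ≤ m := by omega
    rw [Nat.cast_choose ℚ hle]
    have h1 : ((-1 : ℚ) ^ (m - i)) = (-1 : ℚ) ^ m * (-1 : ℚ) ^ i := by
      have : (-1 : ℚ) ^ (m - i) * (-1 : ℚ) ^ i = (-1 : ℚ) ^ m := by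
        rw [← pow_add]
        congr 1
        omega
      have hsq : ((-1 : ℚ) ^ i) * ((-1 : ℚ) ^ i) = 1 := by
        rw [← pow_add, Even.neg_one_pow ⟨i, by omega⟩]
      calc (-1 : ℚ) ^ (m - i) = (-1 : ℚ) ^ (m - i) * (((-1 : ℚ) ^ i) * ((-1 : ℚ) ^ i)) := by
            rw [hsq, mul_one]
        _ = (-1 : ℚ) ^ m * (-1 : ℚ) ^ i := by rw [← mul_assoc, this]
    rw [h1]
    have hi0 : (i.factorial : ℚ) ≠ 0 := Nat.cast_ne_zero.2 i.factorial_ne_zero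
    have hmi0 : ((m - i).factorial : ℚ) ≠ 0 := Nat.cast_ne_zero.2 (m - i).factorial_ne_zero
    have hm0 : (m.factorial : ℚ) ≠ 0 := Nat.cast_ne_zero.2 m.factorial_ne_zero
    field_simp
  rw [Finset.sum_congr rfl hterm, ← Finset.mul_sum]
  have halt : ∑ i ∈ Finset.range (m + 1), (-1 : ℚ) ^ i * (m.choose i : ℚ) = 0 := by
    have := Int.alternating_sum_range_choose (n := m)
    rw [if_neg (by omega)] at this
    exact_mod_cast congrArg (fun z : ℤ => (z : ℚ)) this
  rw [halt, mul_zero]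

lemma exp_mul_exp_neg {f : NC n} (hf : f [] = 0) : mul (exp f) (exp (neg f)) = one := by
  rw [exp_eq_ev, exp_neg_eq_ev]
  show mul (ev cE f) (ev cEneg f) = one
  rw [ev_mul hf, conv_cE_cEneg, ev_cone]

lemma neg_neg' (f : NC n) : neg (neg f) = f := by
  funext w; simp [neg]

lemma neg_const {f : NC n} (hf : f [] = 0) : neg f [] = 0 := by
  simp [neg, hf]

lemma exp_neg_mul_exp {f : NC n} (hf : f [] = 0) : mul (exp (neg f)) (exp f) = one := by
  have := exp_mul_exp_neg (neg_const hf)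
  rwa [neg_neg'] at this

lemma inv_unique {u a b : NC n} (hau : mul a u = one) (hub : mul u b = one) : a = b := by
  calc a = mul a one := (mul_one' a).symm
    _ = mul a (mul u b) := by rw [hub]
    _ = mul (mul a u) b := (mul_assoc' a u b).symm
    _ = mul one b := by rw [hau]
    _ = b := one_mul' b

/-- Conjugation `v ↦ a v b`. -/
def conj (a b v : NC n) : NC n := mul (mul a v) b

variable {a b : NC n}

lemma conj_sum {ι : Type*} (s : Finset ι) (g : ι → NC n) :
    conj a b (∑ i ∈ s, g i) = ∑ i ∈ s, conj a b (g i) := by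
  unfold conj
  rw [mul_sum', sum_mul']

lemma conj_smul (q : ℚ) (v : NC n) : conj a b (smul q v) = smul q (conj a b v) := by
  unfold conj
  rw [mul_smul', smul_mul']

lemma conj_mul (hba : mul b a = one) (u v : NC n) :
    mul (conj a b u) (conj a b v) = conj a b (mul u v) := by
  unfold conj
  rw [mul_assoc' (mul a u) b (mul (mul a v) b)]
  have inner : mul b (mul (mul a v) b) = mul v b := by
    rw [← mul_assoc' b (mul a v) b, ← mul_assoc' b a v, hba, one_mul']
  rw [inner, ← mul_assoc' (mul a u) v b, mul_assoc' a u v]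

lemma conj_one (hab : mul a b = one) : conj a b one = one := by
  unfold conj
  rw [mul_one']
  exact hab

lemma conj_pow (hba : mul b a = one) (hab : mul a b = one) (v : NC n) (k : ℕ) :
    conj a b (pow v k) = pow (conj a b v) k := by
  induction k with
  | zero => exact conj_one hab
  | succ k ih =>
      show conj a b (mul v (pow v k)) = mul (conj a b v) (pow (conj a b v) k)
      rw [← ih, conj_mul hba]

lemma conj_congr {L : ℕ} {u u' : NC n}
    (h : ∀ x : List (Fin n), x.length ≤ L → u x = u' x) :
    ∀ w : List (Fin n), w.length ≤ L → conj a b u w = conj a b u' w := by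
  intro w hw
  unfold conj
  refine mul_congr ?_ (fun v _ => rfl) w hw
  intro v hv
  exact mul_congr (fun x _ => rfl) h v hv

lemma conj_const_zero {v : NC n} (hv : v [] = 0) : conj a b v [] = 0 := by
  unfold conj
  rw [mul_const, mul_const, hv, mul_zero, zero_mul]

lemma conj_exp (hba : mul b a = one) (hab : mul a b = one) {v : NC n} (hv : v [] = 0) :
    conj a b (exp v) = exp (conj a b v) := by
  funext w
  have step1 : conj a b (exp v) w
      = conj a b (∑ k ∈ Finset.range (w.length + 1), smul (cE k) (pow v k)) w := by
    refine conj_congr ?_ w le_rfl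
    intro x hx
    rw [exp_eq_ev]
    exact ev_eq_sum_pow hv (by omega) cE
  rw [step1, conj_sum, Finset.sum_apply]
  have step2 : ∀ k, conj a b (smul (cE k) (pow v k)) = smul (cE k) (pow (conj a b v) k) := by
    intro k
    rw [conj_smul, conj_pow hba hab]
  simp only [step2]
  rw [← Finset.sum_apply]
  exact (ev_eq_sum_pow (conj_const_zero hv) (by omega)
    (fun k => (k.factorial : ℚ)⁻¹)).symm

end NC
namespace NC
variable {n : ℕ}

lemma exp_bch {f g : NC n} (hf : f [] = 0) (hg : g [] = 0) :
    exp (bch f g) = mul (exp f) (exp g) := by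
  unfold bch
  exact exp_log (by rw [mul_const, exp_const, exp_const, one_mul])

lemma smul_const_zero (c : ℚ) {f : NC n} (hf : f [] = 0) : smul c f [] = 0 := by
  simp [smul, hf]

lemma mu2_equivariant {x y z : NC n} (hx : x [] = 0) (hy : y [] = 0) (hz : z [] = 0) :
    mu2 (bch x z) (bch y z) = bch (mu2 x y) z := by
  set a := exp (neg z) with ha
  set b := exp z with hb
  have hba : mul b a = one := exp_mul_exp_neg hz
  have hab : mul a b = one := exp_neg_mul_exp hz
  have hP : bch x z [] = 0 := log_const _
  have hm : bch (neg x) y [] = 0 := log_const _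
  have hq : smul (1/2 : ℚ) (bch (neg x) y) [] = 0 := smul_const_zero _ hm
  have expP : exp (bch x z) = mul (exp x) b := exp_bch hx hz
  have expyz : exp (bch y z) = mul (exp y) b := exp_bch hy hz
  have expm : exp (bch (neg x) y) = mul (exp (neg x)) (exp y) := exp_bch (neg_const hx) hy
  have expnegP : exp (neg (bch x z)) = mul a (exp (neg x)) := by
    refine inv_unique (exp_neg_mul_exp hP) ?_
    rw [expP, mul_assoc' (exp x) b (mul a (exp (neg x))), ← mul_assoc' b a (exp (neg x)),
      hba, one_mul']
    exact exp_mul_exp_neg hx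
  have inner : bch (neg (bch x z)) (bch y z) = conj a b (bch (neg x) y) := by
    show log (mul (exp (neg (bch x z))) (exp (bch y z))) = _
    rw [expnegP, expyz]
    have hconj : mul (mul a (exp (neg x))) (mul (exp y) b)
        = conj a b (exp (bch (neg x) y)) := by
      rw [expm]
      unfold conj
      rw [← mul_assoc' a (exp (neg x)) (exp y),
        mul_assoc' (mul a (exp (neg x))) (exp y) b]
    rw [hconj, conj_exp hba hab hm, log_exp (conj_const_zero hm)]
  show bch (bch x z) (smul (1/2 : ℚ) (bch (neg (bch x z)) (bch y z)))
      = bch (bch x (smul (1/2 : ℚ) (bch (neg x) y))) z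
  rw [inner, ← conj_smul]
  show log (mul (exp (bch x z)) (exp (conj a b (smul (1/2 : ℚ) (bch (neg x) y)))))
      = log (mul (exp (bch x (smul (1/2 : ℚ) (bch (neg x) y)))) (exp z))
  rw [expP, ← conj_exp hba hab hq, exp_bch hx hq, ← hb]
  congr 1
  unfold conj
  rw [mul_assoc' (exp x) b (mul (mul a (exp (smul (1/2 : ℚ) (bch (neg x) y)))) b),
    ← mul_assoc' b (mul a (exp (smul (1/2 : ℚ) (bch (neg x) y)))) b,
    ← mul_assoc' b a (exp (smul (1/2 : ℚ) (bch (neg x) y))), hba, one_mul',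
    ← mul_assoc' (exp x) (exp (smul (1/2 : ℚ) (bch (neg x) y))) b]

end NC

/-- right BCH-equivariance of `μ₂`:
`μ₂(BCH(x,z), BCH(y,z)) = BCH(μ₂(x,y), z)`. -/
theorem mu2_right_equivariant :
    NC.mu2 (NC.bch (NC.X (0 : Fin 3)) (NC.X 2)) (NC.bch (NC.X 1) (NC.X 2))
      = NC.bch (NC.mu2 (NC.X 0) (NC.X 1)) (NC.X 2) := by
  exact NC.mu2_equivariant (by simp [NC.X]) (by simp [NC.X]) (by simp [NC.X])
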